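/- Let Q_N ∈ ℝ^{n₁×n₁} be a nonzero symmetric positive semidefinite matrix, let δ_pN = ‖Q_N‖_∞, and define R_pN = δ_pN I_{n₁} − off(Q_N). Then R_pN is symmetric positive definite, and every eigenvalue λ of R_pN satisfies min{ (Q_N)_{jj} : (Q_N)_{jj} > 0 } ≤ λ < 2 δ_pN. (Here a nonzero positive semidefinite matrix necessarily has a strictly positive diagonal entry, and if a diagonal entry of Q_N is zero then its entire row and column are zero.) -/

import Mathlib

open Matrix

/-- off(B): same off-diagonal entries as B, zero diagonal. -/
def offDiag {ι : Type*} [DecidableEq ι] (B : Matrix ι ι ℝ) : Matrix ι ι ℝ :=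
  B - Matrix.diagonal (fun i => B i i)

/-- Infinity (maximum absolute row sum) norm of a matrix. -/
noncomputable def infNorm {m n : ℕ} (B : Matrix (Fin m) (Fin n) ℝ) : ℝ :=
  ⨆ i, ∑ j, |B i j|

/-- Let `Q_N` be a nonzero symmetric positive semidefinite matrix, `δ_pN = ‖Q_N‖_∞`,
and `R_pN = δ_pN I − off(Q_N)`. Then `R_pN` is symmetric positive definite and every
eigenvalue `λ` of `R_pN` satisfies `min{(Q_N)_jj : (Q_N)_jj > 0} ≤ λ < 2 δ_pN`. -/
theorem stmt_7 {n₁ : ℕ} (QN : Matrix (Fin n₁) (Fin n₁) ℝ)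
    (hQN : QN.PosSemidef) (hQNne : QN ≠ 0)
    (δpN : ℝ) (hδpN : δpN = infNorm QN)
    (RpN : Matrix (Fin n₁) (Fin n₁) ℝ)
    (hRpN : RpN = δpN • (1 : Matrix (Fin n₁) (Fin n₁) ℝ) - offDiag QN)
    (m₀ : ℝ) (hm₀ : IsLeast {v : ℝ | 0 < v ∧ ∃ j, QN j j = v} m₀) :
    RpN.PosDef ∧
    ∀ lam : ℝ, ∀ x : Fin n₁ → ℝ, x ≠ 0 → RpN.mulVec x = lam • x →
      m₀ ≤ lam ∧ lam < 2 * δpN := by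
  obtain ⟨⟨hm₀pos, j₀, hj₀⟩, hlb⟩ := hm₀
  have hdiag : ∀ i, 0 ≤ QN i i := fun i => by simpa using hQN.dotProduct_mulVec_nonneg (Pi.single i 1)
  have hsymm : ∀ i j, QN j i = QN i j := by
    intro i j
    have := congrFun (congrFun hQN.1 i) j
    simpa [Matrix.conjTranspose_apply] using this
  have hzero : ∀ i, QN i i = 0 → ∀ j, QN i j = 0 := by
    intro i hi j
    have h := (hQN.dotProduct_mulVec_zero_iff (Pi.single i 1)).mp (by simpa using hi)
    have := congrFun h j
    rw [← hsymm i j]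
    simpa [mulVec, dotProduct, Pi.single_apply] using this
  have hrowle : ∀ i, ∑ j, |QN i j| ≤ δpN := by
    intro i
    rw [hδpN, infNorm]
    exact le_ciSup (f := fun i => ∑ j, |QN i j|) (Set.Finite.bddAbove (Set.finite_range _)) i
  have hm₀le : m₀ ≤ δpN :=
    calc m₀ = QN j₀ j₀ := hj₀.symm
      _ ≤ |QN j₀ j₀| := le_abs_self _
      _ ≤ ∑ j, |QN j₀ j| := Finset.single_le_sum (f := fun j => |QN j₀ j|) (fun j _ => abs_nonneg _) (Finset.mem_univ j₀)
      _ ≤ δpN := hrowle j₀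
  have key : ∀ i, ∑ j ∈ Finset.univ.erase i, |QN i j| ≤ δpN - m₀ := by
    intro i
    rcases eq_or_lt_of_le (hdiag i) with h0 | hpos
    · have hz : ∀ j ∈ Finset.univ.erase i, |QN i j| = 0 := fun j _ => by
        rw [hzero i h0.symm j, abs_zero]
      rw [Finset.sum_congr rfl hz]
      simp only [Finset.sum_const_zero]
      linarith
    · have hm : m₀ ≤ QN i i := hlb ⟨hpos, i, rfl⟩
      have hs : ∑ j ∈ Finset.univ.erase i, |QN i j| = (∑ j, |QN i j|) - |QN i i| := by
        rw [← Finset.sum_erase_add _ _ (Finset.mem_univ i)]; ring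
      rw [hs, abs_of_nonneg (hdiag i)]
      have := hrowle i
      linarith
  have hRentry : ∀ i j, RpN i j = if i = j then δpN else -QN i j := by
    intro i j
    rw [hRpN]
    by_cases h : i = j
    · subst h; simp [offDiag, Matrix.one_apply, Matrix.diagonal_apply]
    · simp [offDiag, Matrix.one_apply, Matrix.diagonal_apply, h]
  have hrow : ∀ (y : Fin n₁ → ℝ) i,
      (RpN *ᵥ y) i = δpN * y i - ∑ j ∈ Finset.univ.erase i, QN i j * y j := by
    intro y i
    have h1 : (RpN *ᵥ y) i = ∑ j, RpN i j * y j := by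
      simp [Matrix.mulVec, dotProduct]
    rw [h1, ← Finset.sum_erase_add _ _ (Finset.mem_univ i), hRentry i i, if_pos rfl]
    have h2 : ∀ j ∈ Finset.univ.erase i, RpN i j * y j = -(QN i j * y j) := by
      intro j hj
      rw [hRentry i j, if_neg (Ne.symm (Finset.ne_of_mem_erase hj)), neg_mul]
    rw [Finset.sum_congr rfl h2, Finset.sum_neg_distrib]
    ring
  have hsumsq : ∀ x : Fin n₁ → ℝ, x ≠ 0 → 0 < ∑ i, x i ^ 2 := by
    intro x hx
    obtain ⟨k, hk⟩ := Function.ne_iff.mp hx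
    have h1 : 0 < x k ^ 2 := by
      have := abs_pos.mpr hk
      nlinarith [sq_abs (x k)]
    exact lt_of_lt_of_le h1 (Finset.single_le_sum (fun i _ => sq_nonneg (x i)) (Finset.mem_univ k))
  constructor
  · apply Matrix.PosDef.of_dotProduct_mulVec_pos
    · show RpNᴴ = RpN
      ext i j
      rw [Matrix.conjTranspose_apply, star_trivial, hRentry j i, hRentry i j, hsymm i j]
      by_cases h : i = j
      · simp [h]
      · simp [h, Ne.symm h]
    · intro x hx
      have hform : (star x) ⬝ᵥ (RpN *ᵥ x) = ∑ i, x i * (RpN *ᵥ x) i := by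
        simp [dotProduct]
      rw [hform]
      have hexp : ∑ i, x i * (RpN *ᵥ x) i
          = δpN * ∑ i, x i ^ 2 - ∑ i, ∑ j ∈ Finset.univ.erase i, x i * (QN i j * x j) := by
        simp only [hrow]
        rw [Finset.mul_sum, ← Finset.sum_sub_distrib]
        congr 1
        ext i
        rw [mul_sub, Finset.mul_sum]
        ring
      rw [hexp]
      -- bound the cross term
      have hcross : ∑ i, ∑ j ∈ Finset.univ.erase i, x i * (QN i j * x j)
          ≤ (δpN - m₀) * ∑ i, x i ^ 2 := by
        have step1 : ∑ i, ∑ j ∈ Finset.univ.erase i, x i * (QN i j * x j)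
            ≤ ∑ i, ∑ j ∈ Finset.univ.erase i, |QN i j| * ((x i ^ 2 + x j ^ 2) / 2) := by
          apply Finset.sum_le_sum; intro i _
          apply Finset.sum_le_sum; intro j _
          have h1 : x i * (QN i j * x j) ≤ |QN i j| * (|x i| * |x j|) := by
            calc x i * (QN i j * x j) ≤ |x i * (QN i j * x j)| := le_abs_self _
              _ = |QN i j| * (|x i| * |x j|) := by rw [abs_mul, abs_mul]; ring
          have h2 : |x i| * |x j| ≤ (x i ^ 2 + x j ^ 2) / 2 := by
            nlinarith [sq_nonneg (|x i| - |x j|), sq_abs (x i), sq_abs (x j)]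
          calc x i * (QN i j * x j) ≤ |QN i j| * (|x i| * |x j|) := h1
            _ ≤ |QN i j| * ((x i ^ 2 + x j ^ 2) / 2) :=
                mul_le_mul_of_nonneg_left h2 (abs_nonneg _)
        have swap : ∑ i, ∑ j ∈ Finset.univ.erase i, |QN i j| * x j ^ 2
            = ∑ j, ∑ i ∈ Finset.univ.erase j, |QN i j| * x j ^ 2 := by
          simp only [Finset.sum_erase_eq_sub (Finset.mem_univ _)]
          rw [Finset.sum_sub_distrib, Finset.sum_sub_distrib, Finset.sum_comm]
        have half : ∑ i, ∑ j ∈ Finset.univ.erase i, |QN i j| * ((x i ^ 2 + x j ^ 2) / 2)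
            = (∑ i, ∑ j ∈ Finset.univ.erase i, |QN i j| * x i ^ 2) / 2
              + (∑ i, ∑ j ∈ Finset.univ.erase i, |QN i j| * x j ^ 2) / 2 := by
          have e1 : ∑ i, ∑ j ∈ Finset.univ.erase i, |QN i j| * ((x i ^ 2 + x j ^ 2) / 2)
              = ∑ i, ∑ j ∈ Finset.univ.erase i,
                ((|QN i j| * x i ^ 2) / 2 + (|QN i j| * x j ^ 2) / 2) := by
            apply Finset.sum_congr rfl; intro i _
            apply Finset.sum_congr rfl; intro j _
            ring
          rw [e1]
          simp only [Finset.sum_add_distrib, ← Finset.sum_div]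
        have b1 : ∑ i, ∑ j ∈ Finset.univ.erase i, |QN i j| * x i ^ 2
            ≤ (δpN - m₀) * ∑ i, x i ^ 2 := by
          rw [Finset.mul_sum]
          apply Finset.sum_le_sum; intro i _
          rw [← Finset.sum_mul]
          exact mul_le_mul_of_nonneg_right (key i) (sq_nonneg _)
        have b2 : ∑ i, ∑ j ∈ Finset.univ.erase i, |QN i j| * x j ^ 2
            ≤ (δpN - m₀) * ∑ i, x i ^ 2 := by
          rw [swap, Finset.mul_sum]
          apply Finset.sum_le_sum; intro j _
          rw [← Finset.sum_mul]
          apply mul_le_mul_of_nonneg_right _ (sq_nonneg _)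
          have : ∑ i ∈ Finset.univ.erase j, |QN i j| = ∑ i ∈ Finset.univ.erase j, |QN j i| := by
            apply Finset.sum_congr rfl; intro i _; rw [hsymm j i]
          rw [this]
          exact key j
        linarith [step1, b1, b2, half]
      have hpos := hsumsq x hx
      nlinarith [hcross, hpos, hm₀pos]
  · intro lam x hx heig
    obtain ⟨i, -, hi⟩ := Finset.exists_max_image Finset.univ (fun i => |x i|) ⟨j₀, Finset.mem_univ _⟩
    have hxi : 0 < |x i| := by
      obtain ⟨k, hk⟩ := Function.ne_iff.mp hx
      exact lt_of_lt_of_le (abs_pos.mpr hk) (hi k (Finset.mem_univ k))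
    have h1 : (δpN - lam) * x i = ∑ j ∈ Finset.univ.erase i, QN i j * x j := by
      have h := congrFun heig i
      rw [hrow] at h
      simp only [Pi.smul_apply, smul_eq_mul] at h
      linarith
    have h2 : |δpN - lam| * |x i| ≤ (δpN - m₀) * |x i| := by
      rw [← abs_mul, h1]
      calc |∑ j ∈ Finset.univ.erase i, QN i j * x j|
          ≤ ∑ j ∈ Finset.univ.erase i, |QN i j * x j| := Finset.abs_sum_le_sum_abs _ _
        _ ≤ ∑ j ∈ Finset.univ.erase i, |QN i j| * |x i| := by
            apply Finset.sum_le_sum; intro j _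
            rw [abs_mul]
            exact mul_le_mul_of_nonneg_left (hi j (Finset.mem_univ j)) (abs_nonneg _)
        _ = (∑ j ∈ Finset.univ.erase i, |QN i j|) * |x i| := by rw [Finset.sum_mul]
        _ ≤ (δpN - m₀) * |x i| := mul_le_mul_of_nonneg_right (key i) (le_of_lt hxi)
    have h3 : |δpN - lam| ≤ δpN - m₀ := le_of_mul_le_mul_right h2 hxi
    have h4 := abs_le.mp h3
    constructor
    · linarith [h4.1]
    · linarith [h4.2]
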